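/- Let M_X = |+⟩⟨+| ⊗ (|x₊x₊⟩⟨x₊x₊| + |x̄₊x̄₊⟩⟨x̄₊x̄₊|) + |−⟩⟨−| ⊗ (I − |x₋x₋'⟩⟨x₋x₋'|) acting on (ℂ²)^⊗3, where |±⟩ = (|0⟩ ± |1⟩)/√2, |x₊⟩ = cos α |0⟩ + sin α |1⟩ and |x̄₊⟩ = sin α |0⟩ − cos α |1⟩ with tan α = (√5 − 1)/2, α ∈ (0, π/2), |x₋⟩ = (|0⟩ + e^{iπ/3}|1⟩)/√2 and |x₋'⟩ = (|0⟩ + e^{−iπ/3}|1⟩)/√2. Then M_X is an orthogonal projector satisfying M_X |GHZ⟩ = |GHZ⟩ and M_X |W⟩ = |W⟩; i.e., M_X is a valid test operator for the three-qubit GHZ-W subspace. -/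

import Mathlib

noncomputable section

open Matrix

/-- The three-qubit index type: (ℂ²)^⊗3 is realized as functions Fin 2 × Fin 2 × Fin 2 → ℂ. -/
abbrev T3 := Fin 2 × Fin 2 × Fin 2

/-- Standard basis vector of ℂ². -/
def e2 (i : Fin 2) : Fin 2 → ℂ := fun j => if j = i then 1 else 0

/-- The simple tensor u ⊗ v in ℂ² ⊗ ℂ². -/
def tp2 (u v : Fin 2 → ℂ) : Fin 2 × Fin 2 → ℂ := fun p => u p.1 * v p.2

/-- The simple tensor u ⊗ v ⊗ w in (ℂ²)^⊗3. -/
def tp3 (u v w : Fin 2 → ℂ) : T3 → ℂ := fun p => u p.1 * v p.2.1 * w p.2.2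

/-- Standard basis vector |ijk⟩ of (ℂ²)^⊗3. -/
def ket3 (i j k : Fin 2) : T3 → ℂ := tp3 (e2 i) (e2 j) (e2 k)

/-- The three-qubit GHZ state (|000⟩ + |111⟩)/√2. -/
def GHZ : T3 → ℂ := (Real.sqrt 2 : ℂ)⁻¹ • (ket3 0 0 0 + ket3 1 1 1)

/-- The three-qubit W state (|001⟩ + |010⟩ + |100⟩)/√3. -/
def Wst : T3 → ℂ := (Real.sqrt 3 : ℂ)⁻¹ • (ket3 0 0 1 + ket3 0 1 0 + ket3 1 0 0)

/-- Outer product |u⟩⟨v| as a matrix. -/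
def outer {n : Type*} (u v : n → ℂ) : Matrix n n ℂ := fun i j => u i * star (v j)

/-- Kronecker (tensor) product of matrices, indexed by the product type. -/
def kron {m n : Type*} (A : Matrix m m ℂ) (B : Matrix n n ℂ) :
    Matrix (m × n) (m × n) ℂ := fun p q => A p.1 q.1 * B p.2 q.2

/-- The adaptive test operator M_Z = |0⟩⟨0| ⊗ (I − |11⟩⟨11|) + |1⟩⟨1| ⊗ (|00⟩⟨00| + |11⟩⟨11|). -/
def MZ : Matrix T3 T3 ℂ :=
  kron (outer (e2 0) (e2 0)) (1 - outer (tp2 (e2 1) (e2 1)) (tp2 (e2 1) (e2 1))) +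
  kron (outer (e2 1) (e2 1))
    (outer (tp2 (e2 0) (e2 0)) (tp2 (e2 0) (e2 0)) + outer (tp2 (e2 1) (e2 1)) (tp2 (e2 1) (e2 1)))

/-- |x₊⟩ = cos α |0⟩ + sin α |1⟩. -/
def xp (α : ℝ) : Fin 2 → ℂ := (Real.cos α : ℂ) • e2 0 + (Real.sin α : ℂ) • e2 1

/-- |x̄₊⟩ = sin α |0⟩ − cos α |1⟩. -/
def xbp (α : ℝ) : Fin 2 → ℂ := (Real.sin α : ℂ) • e2 0 - (Real.cos α : ℂ) • e2 1

/-- |x₋⟩ = (|0⟩ + e^{iπ/3}|1⟩)/√2. -/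
def xm : Fin 2 → ℂ :=
  (Real.sqrt 2 : ℂ)⁻¹ • (e2 0 + Complex.exp ((Real.pi / 3 : ℂ) * Complex.I) • e2 1)

/-- |x₋'⟩ = (|0⟩ + e^{−iπ/3}|1⟩)/√2. -/
def xm' : Fin 2 → ℂ :=
  (Real.sqrt 2 : ℂ)⁻¹ • (e2 0 + Complex.exp (-(Real.pi / 3 : ℂ) * Complex.I) • e2 1)

/-- |+⟩ = (|0⟩ + |1⟩)/√2. -/
def plus : Fin 2 → ℂ := (Real.sqrt 2 : ℂ)⁻¹ • (e2 0 + e2 1)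

/-- |−⟩ = (|0⟩ − |1⟩)/√2. -/
def minus : Fin 2 → ℂ := (Real.sqrt 2 : ℂ)⁻¹ • (e2 0 - e2 1)

/-- The one-way adaptive test operator
M_X = |+⟩⟨+| ⊗ (|x₊x₊⟩⟨x₊x₊| + |x̄₊x̄₊⟩⟨x̄₊x̄₊|) + |−⟩⟨−| ⊗ (I − |x₋x₋'⟩⟨x₋x₋'|). -/
def MX (α : ℝ) : Matrix T3 T3 ℂ :=
  kron (outer plus plus)
    (outer (tp2 (xp α) (xp α)) (tp2 (xp α) (xp α)) +
      outer (tp2 (xbp α) (xbp α)) (tp2 (xbp α) (xbp α))) +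
  kron (outer minus minus) (1 - outer (tp2 xm xm') (tp2 xm xm'))

/-- The qubit-permutation unitary V_σ with V_σ|i₁i₂i₃⟩ = |i_{σ⁻¹(1)} i_{σ⁻¹(2)} i_{σ⁻¹(3)}⟩,
as a matrix: (V_σ)_{p,q} = 1 iff the triple p precomposed with σ equals the triple q. -/
def permMat (σ : Equiv.Perm (Fin 3)) : Matrix T3 T3 ℂ :=
  fun p q => if (![p.1, p.2.1, p.2.2] ∘ σ) = ![q.1, q.2.1, q.2.2] then 1 else 0

/-- The single-qubit phase rotation R_φ = |0⟩⟨0| + e^{iφ}|1⟩⟨1|. -/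
def Rphi (φ : ℝ) : Matrix (Fin 2) (Fin 2) ℂ :=
  outer (e2 0) (e2 0) + Complex.exp ((φ : ℂ) * Complex.I) • outer (e2 1) (e2 1)

/-- The local unitary U₁ = R_{2π/3} ⊗ R_{2π/3} ⊗ R_{2π/3}. -/
def U1 : Matrix T3 T3 ℂ :=
  kron (Rphi (2 * Real.pi / 3)) (kron (Rphi (2 * Real.pi / 3)) (Rphi (2 * Real.pi / 3)))

/-- The projector Π₃ = |GHZ⟩⟨GHZ| + |W⟩⟨W| onto the GHZ-W subspace. -/
def Pi3 : Matrix T3 T3 ℂ := outer GHZ GHZ + outer Wst Wst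

/-- v₁ = (|000⟩ − |111⟩)/√2. -/
def v1 : T3 → ℂ := (Real.sqrt 2 : ℂ)⁻¹ • (ket3 0 0 0 - ket3 1 1 1)
/-- v₂ = (|001⟩ − |010⟩)/√2. -/
def v2 : T3 → ℂ := (Real.sqrt 2 : ℂ)⁻¹ • (ket3 0 0 1 - ket3 0 1 0)
/-- v₃ = (|001⟩ − |100⟩)/√2. -/
def v3 : T3 → ℂ := (Real.sqrt 2 : ℂ)⁻¹ • (ket3 0 0 1 - ket3 1 0 0)
/-- v₄ = (|011⟩ − |101⟩)/√2. -/
def v4 : T3 → ℂ := (Real.sqrt 2 : ℂ)⁻¹ • (ket3 0 1 1 - ket3 1 0 1)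
/-- v₅ = (|011⟩ − |110⟩)/√2. -/
def v5 : T3 → ℂ := (Real.sqrt 2 : ℂ)⁻¹ • (ket3 0 1 1 - ket3 1 1 0)
/-- v₆ = (|011⟩ + |101⟩ + |110⟩)/√3. -/
def v6 : T3 → ℂ := (Real.sqrt 3 : ℂ)⁻¹ • (ket3 0 1 1 + ket3 1 0 1 + ket3 1 1 0)

/-- σᵢ: the transposition exchanging qubits 1 and i (σ₁ = identity). -/
def sigmas : Fin 3 → Equiv.Perm (Fin 3) := ![1, Equiv.swap 0 1, Equiv.swap 0 2]

/-- M_{X,i} = V_{σᵢ} M_X V_{σᵢ}†: the test operator starting with an X measurement on qubit i. -/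
def MXi (α : ℝ) (i : Fin 3) : Matrix T3 T3 ℂ :=
  permMat (sigmas i) * MX α * (permMat (sigmas i))ᴴ

/-- The symmetrized test operator M̂_X = (1/9) Σ_{i=1}^{3} Σ_{j=0}^{2} U₁^{−j} M_{X,i} U₁^{j}. -/
def MXhat (α : ℝ) : Matrix T3 T3 ℂ :=
  ((1 : ℂ) / 9) • ∑ i : Fin 3, ∑ j : Fin 3, (U1 ^ (j : ℕ))⁻¹ * MXi α i * U1 ^ (j : ℕ)

/-- The rotation-strategy verification operator Ω_μ = (1 − μ) M_Z + μ M̂_X. -/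
def Omega (α μ : ℝ) : Matrix T3 T3 ℂ := ((1 - μ : ℝ) : ℂ) • MZ + (μ : ℂ) • MXhat α

/-- The projected verification operator Ω̂ = (I − Π₃) Ω_μ (I − Π₃). -/
def OmegaHat (α μ : ℝ) : Matrix T3 T3 ℂ := (1 - Pi3) * Omega α μ * (1 - Pi3)

/-- The set of (real) eigenvalues of Ω̂. -/
def eigSet (α μ : ℝ) : Set ℝ :=
  {r : ℝ | ∃ w : T3 → ℂ, w ≠ 0 ∧ OmegaHat α μ *ᵥ w = (r : ℂ) • w}


/- ## auxiliary lemmas -/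

lemma kron_mulVec {m n : Type*} [Fintype m] [Fintype n] (A : Matrix m m ℂ) (B : Matrix n n ℂ)
    (u : m → ℂ) (v : n → ℂ) :
    kron A B *ᵥ (fun p => u p.1 * v p.2) = fun p => (A *ᵥ u) p.1 * (B *ᵥ v) p.2 := by
  funext p
  show ∑ q, kron A B p q * (u q.1 * v q.2) = (∑ q, A p.1 q * u q) * (∑ q, B p.2 q * v q)
  rw [Finset.sum_mul_sum, Fintype.sum_prod_type]
  exact Finset.sum_congr rfl fun q _ => Finset.sum_congr rfl fun r _ => by simp [kron]; ring

lemma outer_mulVec {n : Type*} [Fintype n] (u v w : n → ℂ) :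
    outer u v *ᵥ w = (∑ i, star (v i) * w i) • u := by
  funext i
  show ∑ j, u i * star (v j) * w j = _
  simp [Finset.sum_mul, Finset.mul_sum]
  exact Finset.sum_congr rfl fun j _ => by ring

lemma kron_mul {m n : Type*} [Fintype m] [Fintype n]
    (A C : Matrix m m ℂ) (B D : Matrix n n ℂ) :
    kron A B * kron C D = kron (A * C) (B * D) := by
  ext p q
  show ∑ r, kron A B p r * kron C D r q = (∑ r, A p.1 r * C r q.1) * (∑ r, B p.2 r * D r q.2)
  rw [Finset.sum_mul_sum, Fintype.sum_prod_type]
  exact Finset.sum_congr rfl fun r _ => Finset.sum_congr rfl fun r' _ => by simp [kron]; ring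

lemma outer_mul_outer {n : Type*} [Fintype n] (u v w x : n → ℂ) :
    outer u v * outer w x = (∑ i, star (v i) * w i) • outer u x := by
  ext p q
  show ∑ r, (u p * star (v r)) * (w r * star (x q)) = _
  simp [outer, Matrix.smul_apply, Finset.sum_mul, Finset.mul_sum]
  exact Finset.sum_congr rfl fun r _ => by ring

lemma kron_conjT {m n : Type*} (A : Matrix m m ℂ) (B : Matrix n n ℂ) :
    (kron A B)ᴴ = kron Aᴴ Bᴴ := by
  ext p q; simp [kron, conjTranspose_apply]

lemma outer_conjT {n : Type*} (u v : n → ℂ) : (outer u v)ᴴ = outer v u := by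
  ext p q; simp [outer, conjTranspose_apply, mul_comm]

lemma kron_zero_left {m n : Type*} (B : Matrix n n ℂ) : kron (0 : Matrix m m ℂ) B = 0 := by
  ext p q; simp [kron]

lemma h2c : ((Real.sqrt 2 : ℝ) : ℂ)^2 = 2 := by
  norm_cast; rw [Real.sq_sqrt]; norm_num
lemma h3c : ((Real.sqrt 3 : ℝ) : ℂ)^2 = 3 := by
  norm_cast; rw [Real.sq_sqrt]; norm_num
lemma h2ne : ((Real.sqrt 2 : ℝ) : ℂ) ≠ 0 := by
  simp [Real.sqrt_eq_zero']
lemma h3ne : ((Real.sqrt 3 : ℝ) : ℂ) ≠ 0 := by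
  simp [Real.sqrt_eq_zero']

lemma hexp1 : Complex.exp ((Real.pi / 3 : ℂ) * Complex.I)
    = (1 + (Real.sqrt 3 : ℂ) * Complex.I) / 2 := by
  rw [show ((Real.pi / 3 : ℂ)) = ((Real.pi / 3 : ℝ) : ℂ) from by push_cast; ring,
    Complex.exp_mul_I]
  rw [← Complex.ofReal_cos, ← Complex.ofReal_sin]
  rw [Real.cos_pi_div_three, Real.sin_pi_div_three]
  push_cast; ring

lemma hexp2 : Complex.exp (-(Real.pi / 3 : ℂ) * Complex.I)
    = (1 - (Real.sqrt 3 : ℂ) * Complex.I) / 2 := by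
  rw [show (-(Real.pi / 3 : ℂ)) = ((-(Real.pi / 3) : ℝ) : ℂ) from by push_cast; ring,
    Complex.exp_mul_I]
  rw [← Complex.ofReal_cos, ← Complex.ofReal_sin]
  rw [Real.cos_neg, Real.sin_neg, Real.cos_pi_div_three, Real.sin_pi_div_three]
  push_cast; ring

lemma ipp : ∑ i, star (plus i) * plus i = 1 := by
  simp [plus, e2, Fin.sum_univ_two, Complex.star_def, _root_.map_mul, map_inv₀,
    Complex.conj_ofReal]
  field_simp
  linear_combination -h2c

lemma imm : ∑ i, star (minus i) * minus i = 1 := by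
  simp [minus, e2, Fin.sum_univ_two, Complex.star_def, _root_.map_mul, map_inv₀,
    Complex.conj_ofReal]
  field_simp
  linear_combination -h2c

lemma ipm : ∑ i, star (plus i) * minus i = 0 := by
  simp [plus, minus, e2, Fin.sum_univ_two, Complex.star_def, _root_.map_mul, map_inv₀,
    Complex.conj_ofReal]

lemma imp : ∑ i, star (minus i) * plus i = 0 := by
  simp [plus, minus, e2, Fin.sum_univ_two, Complex.star_def, _root_.map_mul, map_inv₀,
    Complex.conj_ofReal]

lemma tp2_inner (u v w x : Fin 2 → ℂ) :
    ∑ p : Fin 2 × Fin 2, star (tp2 u v p) * tp2 w x p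
      = (∑ i, star (u i) * w i) * (∑ i, star (v i) * x i) := by
  rw [Finset.sum_mul_sum, Fintype.sum_prod_type]
  exact Finset.sum_congr rfl fun i _ => Finset.sum_congr rfl fun j _ => by
    simp [tp2]; ring

section withα
variable {α : ℝ} (hc : (Real.cos α : ℂ)^2 + (Real.sin α : ℂ)^2 = 1)
  (hsc : (Real.sin α : ℂ) * (Real.cos α : ℂ) = (Real.cos α : ℂ)^2 - (Real.sin α : ℂ)^2)

include hc in
lemma ixx : ∑ i, star (xp α i) * xp α i = 1 := by
  simp [xp, e2, Fin.sum_univ_two, Complex.star_def, Complex.conj_ofReal, -Complex.ofReal_cos, -Complex.ofReal_sin]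
  linear_combination hc

include hc in
lemma ibb : ∑ i, star (xbp α i) * xbp α i = 1 := by
  simp [xbp, e2, Fin.sum_univ_two, Complex.star_def, Complex.conj_ofReal, -Complex.ofReal_cos, -Complex.ofReal_sin]
  linear_combination hc

lemma ixb : ∑ i, star (xp α i) * xbp α i = 0 := by
  simp [xp, xbp, e2, Fin.sum_univ_two, Complex.star_def, Complex.conj_ofReal, -Complex.ofReal_cos, -Complex.ofReal_sin]
  ring

lemma ibx : ∑ i, star (xbp α i) * xp α i = 0 := by
  simp [xp, xbp, e2, Fin.sum_univ_two, Complex.star_def, Complex.conj_ofReal, -Complex.ofReal_cos, -Complex.ofReal_sin]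
  ring

end withα

lemma xm_eq : xm = (Real.sqrt 2 : ℂ)⁻¹ •
    (e2 0 + ((1 + (Real.sqrt 3 : ℂ) * Complex.I) / 2) • e2 1) := by
  rw [xm, hexp1]
lemma xm'_eq : xm' = (Real.sqrt 2 : ℂ)⁻¹ •
    (e2 0 + ((1 - (Real.sqrt 3 : ℂ) * Complex.I) / 2) • e2 1) := by
  rw [xm', hexp2]

lemma imxmx : ∑ i, star (xm i) * xm i = 1 := by
  simp [xm_eq, e2, Fin.sum_univ_two, Complex.star_def, _root_.map_mul, map_inv₀,
    map_div₀, map_add, map_sub, Complex.conj_ofReal, Complex.conj_I, map_ofNat]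
  field_simp [h2ne]
  linear_combination (-4) * h2c
    + (-Complex.I^2) * h3c + (-3) * Complex.I_sq

lemma imxmx' : ∑ i, star (xm' i) * xm' i = 1 := by
  simp [xm'_eq, e2, Fin.sum_univ_two, Complex.star_def, _root_.map_mul, map_inv₀,
    map_div₀, map_add, map_sub, Complex.conj_ofReal, Complex.conj_I, map_ofNat]
  field_simp [h2ne]
  linear_combination (-4) * h2c
    + (-Complex.I^2) * h3c + (-3) * Complex.I_sq


lemma proj_sum {n : Type*} [Fintype n] (u v : n → ℂ)
    (huu : ∑ i, star (u i) * u i = 1) (hvv : ∑ i, star (v i) * v i = 1)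
    (huv : ∑ i, star (u i) * v i = 0) (hvu : ∑ i, star (v i) * u i = 0) :
    (outer u u + outer v v) * (outer u u + outer v v) = outer u u + outer v v := by
  rw [add_mul, mul_add, mul_add, outer_mul_outer, outer_mul_outer, outer_mul_outer,
    outer_mul_outer, huu, hvv, huv, hvu]
  simp

lemma one_sub_proj {n : Type*} [Fintype n] [DecidableEq n] (u : n → ℂ)
    (huu : ∑ i, star (u i) * u i = 1) :
    ((1 : Matrix n n ℂ) - outer u u) * (1 - outer u u) = 1 - outer u u := by
  have h : outer u u * outer u u = outer u u := by rw [outer_mul_outer, huu, one_smul]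
  simp only [sub_mul, mul_sub, one_mul, mul_one, h]
  abel

set_option maxHeartbeats 1000000 in
/-- M_X is an orthogonal projector fixing |GHZ⟩ and |W⟩, i.e. a valid test operator for the
three-qubit GHZ-W subspace. -/
theorem MX_is_test_operator
    (α : ℝ) (hα : α ∈ Set.Ioo 0 (Real.pi / 2))
    (htan : Real.tan α = (Real.sqrt 5 - 1) / 2) :
    (MX α).IsHermitian ∧ MX α * MX α = MX α ∧ MX α *ᵥ GHZ = GHZ ∧ MX α *ᵥ Wst = Wst := by
  -- basic real facts
  have hc0 : 0 < Real.cos α :=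
    Real.cos_pos_of_mem_Ioo ⟨by linarith [hα.1, Real.pi_pos], hα.2⟩
  have h5 : Real.sqrt 5 ^ 2 = 5 := Real.sq_sqrt (by norm_num)
  have hsR : Real.sin α = (Real.sqrt 5 - 1) / 2 * Real.cos α := by
    have ht := Real.tan_eq_sin_div_cos α
    rw [htan, eq_div_iff (ne_of_gt hc0)] at ht
    linarith [ht]
  have hscR : Real.sin α * Real.cos α = Real.cos α ^ 2 - Real.sin α ^ 2 := by
    rw [hsR]; linear_combination (Real.cos α ^ 2 / 4) * h5
  have hcR : Real.cos α ^ 2 + Real.sin α ^ 2 = 1 := by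
    nlinarith [Real.sin_sq_add_cos_sq α]
  have hc : (Real.cos α : ℂ) ^ 2 + (Real.sin α : ℂ) ^ 2 = 1 := by exact_mod_cast hcR
  have hsc : (Real.sin α : ℂ) * (Real.cos α : ℂ)
      = (Real.cos α : ℂ) ^ 2 - (Real.sin α : ℂ) ^ 2 := by exact_mod_cast hscR
  -- block components
  have hMX : MX α =
      kron (outer plus plus)
        (outer (tp2 (xp α) (xp α)) (tp2 (xp α) (xp α)) +
          outer (tp2 (xbp α) (xbp α)) (tp2 (xbp α) (xbp α))) +
      kron (outer minus minus) (1 - outer (tp2 xm xm') (tp2 xm xm')) := rfl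
  -- inner products on two qubits
  have i11 : ∑ p, star (tp2 (xp α) (xp α) p) * tp2 (xp α) (xp α) p = 1 := by
    rw [tp2_inner, ixx hc]; ring
  have i22 : ∑ p, star (tp2 (xbp α) (xbp α) p) * tp2 (xbp α) (xbp α) p = 1 := by
    rw [tp2_inner, ibb hc]; ring
  have i12 : ∑ p, star (tp2 (xp α) (xp α) p) * tp2 (xbp α) (xbp α) p = 0 := by
    rw [tp2_inner, ixb]; ring
  have i21 : ∑ p, star (tp2 (xbp α) (xbp α) p) * tp2 (xp α) (xp α) p = 0 := by
    rw [tp2_inner, ibx]; ring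
  have iψψ : ∑ p, star (tp2 xm xm' p) * tp2 xm xm' p = 1 := by
    rw [tp2_inner, imxmx, imxmx']; ring
  -- Hermitian
  have herm : (MX α).IsHermitian := by
    show (MX α)ᴴ = MX α
    rw [hMX, conjTranspose_add, kron_conjT, kron_conjT, conjTranspose_add,
      conjTranspose_sub, conjTranspose_one, outer_conjT, outer_conjT, outer_conjT,
      outer_conjT, outer_conjT]
  -- idempotent
  have hPpPp : outer plus plus * outer plus plus = outer plus plus := by
    rw [outer_mul_outer, ipp, one_smul]
  have hPmPm : outer minus minus * outer minus minus = outer minus minus := by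
    rw [outer_mul_outer, imm, one_smul]
  have hPpPm : outer plus plus * outer minus minus = 0 := by
    rw [outer_mul_outer, ipm, zero_smul]
  have hPmPp : outer minus minus * outer plus plus = 0 := by
    rw [outer_mul_outer, imp, zero_smul]
  have idem : MX α * MX α = MX α := by
    rw [hMX, add_mul, mul_add, mul_add, kron_mul, kron_mul, kron_mul, kron_mul,
      hPpPp, hPmPm, hPpPm, hPmPp, kron_zero_left, kron_zero_left,
      proj_sum _ _ i11 i22 i12 i21, one_sub_proj _ iψψ]
    abel
  -- the four two-qubit vectors
  have hB1G : (outer (tp2 (xp α) (xp α)) (tp2 (xp α) (xp α)) +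
      outer (tp2 (xbp α) (xbp α)) (tp2 (xbp α) (xbp α))) *ᵥ
      (tp2 (e2 0) (e2 0) + tp2 (e2 1) (e2 1)) = tp2 (e2 0) (e2 0) + tp2 (e2 1) (e2 1) := by
    funext p
    obtain ⟨i, j⟩ := p
    fin_cases i <;> fin_cases j <;>
      simp [mulVec, dotProduct, outer, tp2, xp, xbp, e2, Fintype.sum_prod_type,
        Fin.sum_univ_two, Complex.star_def, Complex.conj_ofReal,
        -Complex.ofReal_cos, -Complex.ofReal_sin]
    · linear_combination ((Real.cos α:ℂ)^2 + (Real.sin α:ℂ)^2 + 1) * hc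
    · ring
    · ring
    · linear_combination ((Real.cos α:ℂ)^2 + (Real.sin α:ℂ)^2 + 1) * hc
  have hB1W : (outer (tp2 (xp α) (xp α)) (tp2 (xp α) (xp α)) +
      outer (tp2 (xbp α) (xbp α)) (tp2 (xbp α) (xbp α))) *ᵥ
      (tp2 (e2 0) (e2 0) + tp2 (e2 0) (e2 1) + tp2 (e2 1) (e2 0))
      = tp2 (e2 0) (e2 0) + tp2 (e2 0) (e2 1) + tp2 (e2 1) (e2 0) := by
    funext p
    obtain ⟨i, j⟩ := p
    fin_cases i <;> fin_cases j <;>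
      simp [mulVec, dotProduct, outer, tp2, xp, xbp, e2, Fintype.sum_prod_type,
        Fin.sum_univ_two, Complex.star_def, Complex.conj_ofReal,
        -Complex.ofReal_cos, -Complex.ofReal_sin]
    · linear_combination (1 + (Real.sin α:ℂ)^2 + (Real.cos α:ℂ)^2) * hc
        + (-2*(Real.cos α:ℂ)*(Real.sin α:ℂ)) * hsc
    · linear_combination (1 + 2*(Real.sin α:ℂ)^2 + (Real.cos α:ℂ)*(Real.sin α:ℂ)) * hc
        + (1 - 2*(Real.sin α:ℂ)^2) * hsc
    · linear_combination (1 + 2*(Real.sin α:ℂ)^2 + (Real.cos α:ℂ)*(Real.sin α:ℂ)) * hc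
        + (1 - 2*(Real.sin α:ℂ)^2) * hsc
    · linear_combination (2*(Real.cos α:ℂ)*(Real.sin α:ℂ)) * hsc
  have hψG : ∑ q, star (tp2 xm xm' q) * (tp2 (e2 0) (e2 0) - tp2 (e2 1) (e2 1)) q = 0 := by
    simp [tp2, xm_eq, xm'_eq, e2, Fintype.sum_prod_type, Fin.sum_univ_two,
      Complex.star_def, _root_.map_mul, map_inv₀, map_div₀, map_add, map_sub, _root_.map_one,
      Complex.conj_ofReal, Complex.conj_I, map_ofNat]
    linear_combination (Complex.I^2 * (((Real.sqrt 2:ℝ):ℂ)⁻¹)^2 / 4) * h3c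
      + (3/4 * (((Real.sqrt 2:ℝ):ℂ)⁻¹)^2) * Complex.I_sq
  have hψW : ∑ q, star (tp2 xm xm' q) *
      (tp2 (e2 0) (e2 1) + tp2 (e2 1) (e2 0) - tp2 (e2 0) (e2 0)) q = 0 := by
    simp [tp2, xm_eq, xm'_eq, e2, Fintype.sum_prod_type, Fin.sum_univ_two,
      Complex.star_def, _root_.map_mul, map_inv₀, map_div₀, map_add, map_sub, _root_.map_one,
      Complex.conj_ofReal, Complex.conj_I, map_ofNat]
    ring
  have hB2G : ((1 : Matrix (Fin 2 × Fin 2) (Fin 2 × Fin 2) ℂ) - outer (tp2 xm xm') (tp2 xm xm')) *ᵥ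
      (tp2 (e2 0) (e2 0) - tp2 (e2 1) (e2 1)) = tp2 (e2 0) (e2 0) - tp2 (e2 1) (e2 1) := by
    rw [sub_mulVec, one_mulVec, outer_mulVec, hψG, zero_smul, sub_zero]
  have hB2W : ((1 : Matrix (Fin 2 × Fin 2) (Fin 2 × Fin 2) ℂ) - outer (tp2 xm xm') (tp2 xm xm')) *ᵥ
      (tp2 (e2 0) (e2 1) + tp2 (e2 1) (e2 0) - tp2 (e2 0) (e2 0))
      = tp2 (e2 0) (e2 1) + tp2 (e2 1) (e2 0) - tp2 (e2 0) (e2 0) := by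
    rw [sub_mulVec, one_mulVec, outer_mulVec, hψW, zero_smul, sub_zero]
  -- action of MX on plus/minus simple tensors
  have hMp : ∀ v : Fin 2 × Fin 2 → ℂ,
      (outer (tp2 (xp α) (xp α)) (tp2 (xp α) (xp α)) +
        outer (tp2 (xbp α) (xbp α)) (tp2 (xbp α) (xbp α))) *ᵥ v = v →
      MX α *ᵥ (fun p : T3 => plus p.1 * v p.2) = fun p : T3 => plus p.1 * v p.2 := by
    intro v hv
    rw [hMX, add_mulVec, kron_mulVec, kron_mulVec, outer_mulVec, outer_mulVec, ipp, imp,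
      one_smul, zero_smul, hv]
    funext p
    simp
  have hMm : ∀ v : Fin 2 × Fin 2 → ℂ,
      ((1 : Matrix (Fin 2 × Fin 2) (Fin 2 × Fin 2) ℂ) - outer (tp2 xm xm') (tp2 xm xm')) *ᵥ v = v →
      MX α *ᵥ (fun p : T3 => minus p.1 * v p.2) = fun p : T3 => minus p.1 * v p.2 := by
    intro v hv
    rw [hMX, add_mulVec, kron_mulVec, kron_mulVec, outer_mulVec, outer_mulVec, ipm, imm,
      one_smul, zero_smul, hv]
    funext p
    simp
  -- decompositions of GHZ and W
  have hGdec : GHZ = (2 : ℂ)⁻¹ •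
      ((fun p : T3 => plus p.1 * (tp2 (e2 0) (e2 0) + tp2 (e2 1) (e2 1)) p.2) +
       (fun p : T3 => minus p.1 * (tp2 (e2 0) (e2 0) - tp2 (e2 1) (e2 1)) p.2)) := by
    funext p
    obtain ⟨i, j, k⟩ := p
    fin_cases i <;> fin_cases j <;> fin_cases k <;>
      simp [GHZ, ket3, tp3, tp2, e2, plus, minus] <;> ring
  have hWdec : Wst = ((Real.sqrt 3 : ℂ)⁻¹ * (Real.sqrt 2 : ℂ)⁻¹) •
      ((fun p : T3 => plus p.1 *
          (tp2 (e2 0) (e2 0) + tp2 (e2 0) (e2 1) + tp2 (e2 1) (e2 0)) p.2) +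
       (fun p : T3 => minus p.1 *
          (tp2 (e2 0) (e2 1) + tp2 (e2 1) (e2 0) - tp2 (e2 0) (e2 0)) p.2)) := by
    funext p
    obtain ⟨i, j, k⟩ := p
    fin_cases i <;> fin_cases j <;> fin_cases k <;>
      simp [Wst, ket3, tp3, tp2, e2, plus, minus] <;>
      (field_simp [h2ne, h3ne]; linear_combination h2c)
  refine ⟨herm, idem, ?_, ?_⟩
  · rw [hGdec, mulVec_smul, mulVec_add, hMp _ hB1G, hMm _ hB2G]
  · rw [hWdec, mulVec_smul, mulVec_add, hMp _ hB1W, hMm _ hB2W]
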